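/- Let $V$ be finite, $L$ a linear operator on $\mathbb{R}^V$ with $L\mathbf{1} = 0$ (zero row sums), and $h, \pi : V \to \mathbb{R}_{>0}$ strictly positive functions depending smoothly on $t \in [0,1]$. Set $\rho_t = h_t \pi_t$ (pointwise product). Then $\partial_t \rho_t = (L_t^{h_t})^\dagger \rho_t$ holds at every point if and only if $h_t^{-1}(\partial_t h_t + L_t h_t) = \pi_t^{-1}(L_t^\dagger \pi_t - \partial_t \pi_t)$ pointwise, where $L_t^{h}$ is the Doob transform $(L^h f)(x) = h(x)^{-1}(L(hf))(x) - h(x)^{-1}(Lh)(x)f(x)$. -/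

import Mathlib

open Finset

variable {V : Type*}

/-- The adjoint (with respect to counting measure) of an operator on `ℝ^V`
given in matrix form: if `T f i = ∑ j, M i j * f j` then
`adjOp T f i = ∑ j, M j i * f j`. -/
noncomputable def adjOp [Fintype V] [DecidableEq V]
    (T : (V → ℝ) → (V → ℝ)) : (V → ℝ) → (V → ℝ) :=
  fun f i => ∑ j, T (Pi.single i 1) j * f j

/-- The reversal of a generator `T` with respect to a (positive) function `p`:
`(R_p(T) f)(x) = p(x)⁻¹ (T†(p·f))(x) − p(x)⁻¹ (T† p)(x) f(x)`. -/
noncomputable def Rev [Fintype V] [DecidableEq V]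
    (p : V → ℝ) (T : (V → ℝ) → (V → ℝ)) : (V → ℝ) → (V → ℝ) :=
  fun f x => (p x)⁻¹ * adjOp T (fun y => p y * f y) x - (p x)⁻¹ * adjOp T p x * f x

/-- The generalized Doob `h`-transform of a generator `T`:
`(H_h(T) f)(x) = h(x)⁻¹ (T(h·f))(x) − h(x)⁻¹ (T h)(x) f(x)`. -/
noncomputable def Doob (h : V → ℝ) (T : (V → ℝ) → (V → ℝ)) : (V → ℝ) → (V → ℝ) :=
  fun f x => (h x)⁻¹ * T (fun y => h y * f y) x - (h x)⁻¹ * T h x * f x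

lemma key [Fintype V] [DecidableEq V] (T : (V → ℝ) →ₗ[ℝ] (V → ℝ)) (h p : V → ℝ)
    (hne : ∀ x, h x ≠ 0) (x : V) :
    adjOp (Doob h ⇑T) (fun y => h y * p y) x = h x * adjOp ⇑T p x - T h x * p x := by
  unfold adjOp Doob
  have hsingle : (fun y => h y * (Pi.single x 1 : V → ℝ) y) = (h x) • (Pi.single x 1 : V → ℝ) := by
    funext y
    by_cases hy : y = x
    · subst hy; simp
    · simp [Pi.single_eq_of_ne hy]
  rw [hsingle, map_smul]
  have step : ∀ j : V, ((h j)⁻¹ * (h x • T (Pi.single x 1)) j -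
      (h j)⁻¹ * T h j * (Pi.single x 1 : V → ℝ) j) * (h j * p j)
      = h x * (T (Pi.single x 1) j * p j) - T h j * (Pi.single x 1 : V → ℝ) j * p j := by
    intro j
    have : (h j)⁻¹ * h j = 1 := inv_mul_cancel₀ (hne j)
    simp only [Pi.smul_apply, smul_eq_mul]
    field_simp
    linear_combination (h x * T (Pi.single x 1) j * p j - T h j * (Pi.single x 1 : V → ℝ) j * p j) * this
  rw [Finset.sum_congr rfl (fun j _ => step j), Finset.sum_sub_distrib, ← Finset.mul_sum]
  congr 1
  rw [Finset.sum_eq_single x]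
  · simp
  · intro b _ hb; simp [Pi.single_eq_of_ne hb]
  · intro hx; exact absurd (Finset.mem_univ x) hx

/-- Marginal prescription for the generalized Doob `h`-transform: with
`ρ_t = h_t π_t`, the forward equation `∂_t ρ_t = (L_t^{h_t})† ρ_t` holds at `t`
if and only if `h_t⁻¹(∂_t h_t + L_t h_t) = π_t⁻¹(L_t† π_t − ∂_t π_t)` pointwise. -/
theorem stmt_8 [Fintype V] [DecidableEq V]
    (L : ℝ → (V → ℝ) →ₗ[ℝ] (V → ℝ))
    (hL1 : ∀ t, L t (fun _ => 1) = 0)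
    (h π h' π' : ℝ → V → ℝ)
    (hpos : ∀ t x, 0 < h t x) (πpos : ∀ t x, 0 < π t x)
    (hd : ∀ t x, HasDerivAt (fun s => h s x) (h' t x) t)
    (πd : ∀ t x, HasDerivAt (fun s => π s x) (π' t x) t)
    (t : ℝ) (ht : t ∈ Set.Icc (0 : ℝ) 1) :
    ((∀ x, HasDerivAt (fun s => h s x * π s x)
        (adjOp (Doob (h t) ⇑(L t)) (fun y => h t y * π t y) x) t) ↔
      (∀ x, (h t x)⁻¹ * (h' t x + L t (h t) x) =
        (π t x)⁻¹ * (adjOp ⇑(L t) (π t) x - π' t x))) := by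
  have hne : ∀ x, h t x ≠ 0 := fun x => (hpos t x).ne'
  have πne : ∀ x, π t x ≠ 0 := fun x => (πpos t x).ne'
  constructor
  · intro H x
    have h1 := (hd t x).mul (πd t x)
    have h2 := (H x).unique h1
    rw [key (L t) (h t) (π t) hne x] at h2
    field_simp [hne x, πne x]
    linear_combination -h2
  · intro H x
    have h1 := (hd t x).mul (πd t x)
    have h2 := H x
    field_simp [hne x, πne x] at h2
    rw [key (L t) (h t) (π t) hne x]
    refine h1.congr_deriv ?_; symm
    linear_combination -h2
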